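/- Let (R,m) be a Noetherian local ring and let J = (f_1,...,f_n) be a reduction of I = (f_1,...,f_n,f), ideals of R. Then rn_J(I) + 1 ≤ rt(I), i.e., the reduction number of I with respect to J plus one is at most the relation type of I. -/
import Mathlib


open Ideal Submodule Polynomial

variable {R : Type*} [CommRing R]

/-- The canonical presentation of the Rees algebra of `span (range g)`,
sending `ξᵢ` to `gᵢ t`. -/
noncomputable def reesPresentation {m : ℕ} (g : Fin m → R) :
    MvPolynomial (Fin m) R →ₐ[R] reesAlgebra (Ideal.span (Set.range g)) :=
  MvPolynomial.aeval fun i =>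
    (⟨Polynomial.monomial 1 (g i), reesAlgebra.monomial_mem.mpr (by
        rw [pow_one]; exact Ideal.subset_span ⟨i, rfl⟩)⟩ :
      reesAlgebra (Ideal.span (Set.range g)))

/-- The ideal of equations of the Rees algebra for the presentation determined by `g`. -/
noncomputable def reesEquations {m : ℕ} (g : Fin m → R) : Ideal (MvPolynomial (Fin m) R) :=
  RingHom.ker (reesPresentation g).toRingHom

/-- The subideal of an ideal of `MvPolynomial` generated by its homogeneous
elements of degree at most `d`. -/
noncomputable def idealUpToDegree {m : ℕ} (Q : Ideal (MvPolynomial (Fin m) R)) (d : ℕ) :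
    Ideal (MvPolynomial (Fin m) R) :=
  Ideal.span {P | P ∈ Q ∧ ∃ e ≤ d, MvPolynomial.IsHomogeneous P e}

/-- The relation type of the ideal `span (range g)`, computed from the presentation of its
Rees algebra determined by the generators `g`. -/
noncomputable def relationType {m : ℕ} (g : Fin m → R) : ℕ :=
  sInf {L | 1 ≤ L ∧ idealUpToDegree (reesEquations g) L = reesEquations g}

/-- The reduction number of `I` with respect to `J`. -/
noncomputable def reductionNumber (J I : Ideal R) : ℕ :=
  sInf {r | I ^ (r + 1) = J * I ^ r}

/-! ### Auxiliary lemmas -/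

/-- Evaluating a homogeneous polynomial at `vᵢ X` gives `P(v) Xᵈ`. -/
lemma aeval_CX_of_isHomogeneous {m : ℕ} (v : Fin m → R) {P : MvPolynomial (Fin m) R} {d : ℕ}
    (hP : P.IsHomogeneous d) :
    MvPolynomial.aeval (fun i => Polynomial.C (v i) * Polynomial.X) P
      = Polynomial.C (MvPolynomial.eval v P) * Polynomial.X ^ d := by
  rw [P.as_sum, map_sum, map_sum, map_sum, Finset.sum_mul]
  refine Finset.sum_congr rfl fun α hα => ?_
  rw [MvPolynomial.aeval_monomial, MvPolynomial.eval_monomial]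
  have hdeg : (α.sum fun _ e => e) = d := by
    have := hP (MvPolynomial.mem_support_iff.mp hα)
    simpa [Finsupp.weight_apply, Finsupp.sum] using this
  rw [← hdeg]
  simp only [Finsupp.prod, Finsupp.sum, mul_pow, Finset.prod_mul_distrib, _root_.map_mul,
    map_prod, map_pow, Finset.prod_pow_eq_pow_sum, algebraMap_eq]
  ring

lemma mem_reesEquations_iff {m : ℕ} (v : Fin m → R) (P : MvPolynomial (Fin m) R) :
    P ∈ reesEquations v ↔
      MvPolynomial.aeval (fun i => Polynomial.C (v i) * Polynomial.X) P = 0 := by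
  have hcomp : ((Subalgebra.val _).comp (reesPresentation v)) =
      MvPolynomial.aeval (fun i => Polynomial.C (v i) * Polynomial.X) := by
    rw [reesPresentation, MvPolynomial.comp_aeval]
    congr 1
    funext i
    simp [← Polynomial.C_mul_X_pow_eq_monomial]
  have hval : ∀ P : MvPolynomial (Fin m) R,
      ((reesPresentation v P : R[X])) =
        MvPolynomial.aeval (fun i => Polynomial.C (v i) * Polynomial.X) P := by
    intro P
    exact DFunLike.congr_fun hcomp P
  constructor
  · intro h
    rw [← hval]
    have : reesPresentation v P = 0 := h
    rw [this]; rfl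
  · intro h
    have : reesPresentation v P = 0 := by
      apply Subtype.ext
      rw [← hval] at h
      exact h
    exact this

lemma eval_eq_zero_of_mem_reesEquations {m : ℕ} {v : Fin m → R} {P : MvPolynomial (Fin m) R}
    {d : ℕ} (hP : P ∈ reesEquations v) (hhom : P.IsHomogeneous d) :
    MvPolynomial.eval v P = 0 := by
  have h := (mem_reesEquations_iff v P).mp hP
  rw [aeval_CX_of_isHomogeneous v hhom] at h
  have := Polynomial.C_mul_X_pow_eq_monomial (R := R) (n := d) (a := MvPolynomial.eval v P)
  rw [this] at h
  exact (Polynomial.monomial_eq_zero_iff _ _).mp h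

lemma homogeneousComponent_mem_reesEquations {m : ℕ} {v : Fin m → R}
    {P : MvPolynomial (Fin m) R} (hP : P ∈ reesEquations v) (e : ℕ) :
    MvPolynomial.homogeneousComponent e P ∈ reesEquations v := by
  rw [mem_reesEquations_iff]
  rw [aeval_CX_of_isHomogeneous v (MvPolynomial.homogeneousComponent_isHomogeneous e P)]
  rcases le_or_gt e P.totalDegree with he | he
  · -- extract coefficient e from the vanishing sum
    have h := (mem_reesEquations_iff v P).mp hP
    have hsum : ∑ i ∈ Finset.range (P.totalDegree + 1),
        Polynomial.C (MvPolynomial.eval v (MvPolynomial.homogeneousComponent i P)) *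
          Polynomial.X ^ i = 0 := by
      calc ∑ i ∈ Finset.range (P.totalDegree + 1),
            Polynomial.C (MvPolynomial.eval v (MvPolynomial.homogeneousComponent i P)) *
              Polynomial.X ^ i
          = ∑ i ∈ Finset.range (P.totalDegree + 1),
              MvPolynomial.aeval (fun i => Polynomial.C (v i) * Polynomial.X)
                (MvPolynomial.homogeneousComponent i P) := by
            refine Finset.sum_congr rfl fun i _ => ?_
            rw [aeval_CX_of_isHomogeneous v (MvPolynomial.homogeneousComponent_isHomogeneous i P)]
        _ = MvPolynomial.aeval (fun i => Polynomial.C (v i) * Polynomial.X) P := by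
            rw [← map_sum, MvPolynomial.sum_homogeneousComponent]
        _ = 0 := h
    have hcoe : MvPolynomial.eval v (MvPolynomial.homogeneousComponent e P) = 0 := by
      have := congrArg (fun q => Polynomial.coeff q e) hsum
      simp only [Polynomial.finset_sum_coeff, Polynomial.coeff_C_mul, Polynomial.coeff_X_pow,
        Polynomial.coeff_zero] at this
      rw [Finset.sum_eq_single e] at this
      · simpa using this
      · intro b _ hb
        simp [Ne.symm hb]
      · intro hnotmem
        exact absurd (Finset.mem_range.mpr (Nat.lt_succ_of_le he)) hnotmem
    rw [hcoe]
    simp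
  · rw [MvPolynomial.homogeneousComponent_eq_zero _ _ he]
    simp

lemma idealUpToDegree_le {m : ℕ} (Q : Ideal (MvPolynomial (Fin m) R)) (d : ℕ) :
    idealUpToDegree Q d ≤ Q :=
  Ideal.span_le.mpr fun _ hP => hP.1

lemma exists_relationType_mem [IsNoetherianRing R] {m : ℕ} (v : Fin m → R) :
    ∃ L, 1 ≤ L ∧ idealUpToDegree (reesEquations v) L = reesEquations v := by
  obtain ⟨T, hT⟩ := (isNoetherian_def.mp inferInstance (reesEquations v) : (reesEquations v).FG)
  refine ⟨T.sup MvPolynomial.totalDegree + 1, by omega, ?_⟩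
  refine le_antisymm (idealUpToDegree_le _ _) ?_
  conv_lhs => rw [← hT]
  rw [Submodule.span_le]
  intro t ht
  have htQ : t ∈ reesEquations v := by rw [← hT]; exact Ideal.subset_span ht
  rw [← MvPolynomial.sum_homogeneousComponent t]
  refine Ideal.sum_mem _ fun i hi => ?_
  refine Ideal.subset_span ⟨homogeneousComponent_mem_reesEquations htQ i, i, ?_,
    MvPolynomial.homogeneousComponent_isHomogeneous i t⟩
  have : i ≤ t.totalDegree := Nat.lt_succ_iff.mp (Finset.mem_range.mp hi)
  have : t.totalDegree ≤ T.sup MvPolynomial.totalDegree := Finset.le_sup ht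
  omega

lemma prod_pow_mem_pow {ι : Type*} (I : Ideal R) {v : ι → R} (hv : ∀ j, v j ∈ I)
    (s : Finset ι) (β : ι → ℕ) : (∏ j ∈ s, v j ^ β j) ∈ I ^ (∑ j ∈ s, β j) := by
  classical
  induction s using Finset.induction with
  | empty => simp [Ideal.one_eq_top]
  | @insert a s ha ih =>
      rw [Finset.prod_insert ha, Finset.sum_insert ha, pow_add]
      exact Ideal.mul_mem_mul (Ideal.pow_mem_pow (hv _) _) ih

lemma exists_homog_eval_eq {m : ℕ} (v : Fin m → R) (k : ℕ) {b : R}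
    (hb : b ∈ (Ideal.span (Set.range v)) ^ k) :
    ∃ P : MvPolynomial (Fin m) R, P.IsHomogeneous k ∧ MvPolynomial.eval v P = b := by
  induction k generalizing b with
  | zero =>
      exact ⟨MvPolynomial.C b, MvPolynomial.isHomogeneous_C _ _, by simp⟩
  | succ k ih =>
      rw [pow_succ] at hb
      refine Submodule.mul_induction_on hb ?_ ?_
      · intro x hx y hy
        obtain ⟨Px, hPx, hPxe⟩ := ih hx
        obtain ⟨c, hc⟩ := (mem_span_range_iff_exists_fun _).mp hy
        refine ⟨Px * ∑ i, MvPolynomial.C (c i) * MvPolynomial.X i, ?_, ?_⟩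
        · refine hPx.mul (MvPolynomial.IsHomogeneous.sum _ _ _ fun i _ => ?_)
          exact MvPolynomial.isHomogeneous_C_mul_X _ _
        · have he : MvPolynomial.eval v (∑ i, MvPolynomial.C (c i) * MvPolynomial.X i) = y := by
            rw [map_sum]
            simp only [_root_.map_mul, MvPolynomial.eval_C, MvPolynomial.eval_X]
            simpa [smul_eq_mul] using hc
          rw [_root_.map_mul, hPxe, he]
      · rintro x y ⟨Px, hPx, hPxe⟩ ⟨Py, hPy, hPye⟩
        exact ⟨Px + Py, hPx.add hPy, by rw [map_add, hPxe, hPye]⟩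

/-- The evaluation at `(0,…,0,1)` of a homogeneous polynomial of degree `e` is the coefficient
of `ξ_last ^ e`. -/
lemma eval_snoc_eq_coeff {n : ℕ} {P : MvPolynomial (Fin (n + 1)) R} {e : ℕ}
    (hP : P.IsHomogeneous e) :
    MvPolynomial.eval (Fin.snoc (fun _ : Fin n => (0 : R)) 1) P
      = MvPolynomial.coeff (Finsupp.single (Fin.last n) e) P := by
  set w : Fin (n + 1) → R := Fin.snoc (fun _ : Fin n => (0 : R)) 1 with hw
  conv_lhs => rw [P.as_sum]
  rw [map_sum]
  rw [Finset.sum_eq_single (Finsupp.single (Fin.last n) e)]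
  · rw [MvPolynomial.eval_monomial, Finsupp.prod_single_index (by simp)]
    have : w (Fin.last n) = 1 := by simp [hw, Fin.snoc_last]
    rw [this, one_pow, mul_one]
  · intro α hα hne
    rw [MvPolynomial.eval_monomial]
    have hdeg : (∑ j ∈ α.support, α j) = e := by
      have := hP (MvPolynomial.mem_support_iff.mp hα)
      simpa [Finsupp.weight_apply, Finsupp.sum] using this
    obtain ⟨i, hi0, hil⟩ : ∃ i, α i ≠ 0 ∧ i ≠ Fin.last n := by
      by_contra hcon
      push_neg at hcon
      have hss : α.support ⊆ {Fin.last n} := by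
        intro j hj
        rw [Finset.mem_singleton]
        exact hcon j (Finsupp.mem_support_iff.mp hj)
      have hαs := Finsupp.support_subset_singleton.mp hss
      apply hne
      rw [hαs]
      congr 1
      rw [hαs] at hdeg
      rcases eq_or_ne (α (Fin.last n)) 0 with h0 | h0
      · rw [h0] at hdeg ⊢
        simp only [Finsupp.single_zero, Finsupp.support_zero, Finset.sum_empty] at hdeg
        omega
      · rwa [Finsupp.support_single_ne_zero _ h0, Finset.sum_singleton,
          Finsupp.single_eq_same] at hdeg
    have hwi : w i = 0 := by
      obtain ⟨i', rfl⟩ := Fin.exists_castSucc_eq.mpr hil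
      simp [hw, Fin.snoc_castSucc]
    rw [Finsupp.prod]
    refine mul_eq_zero_of_right _ ?_
    refine Finset.prod_eq_zero (Finsupp.mem_support_iff.mpr hi0) ?_
    rw [hwi, zero_pow hi0]
  · intro h
    rw [MvPolynomial.notMem_support_iff.mp h]
    simp

/-- A homogeneous polynomial of positive degree whose `ξ_last^e` coefficient vanishes
evaluates into `J · I^(e-1)`. -/
lemma eval_mem_of_coeff_eq_zero {n : ℕ} (f : Fin n → R) (g : R) {P : MvPolynomial (Fin (n+1)) R}
    {k : ℕ} (hP : P.IsHomogeneous (k + 1))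
    (hc : MvPolynomial.coeff (Finsupp.single (Fin.last n) (k + 1)) P = 0) :
    MvPolynomial.eval (Fin.snoc f g) P ∈
      Ideal.span (Set.range f) * (Ideal.span (Set.range (Fin.snoc f g : Fin (n+1) → R))) ^ k := by
  classical
  set F : Fin (n + 1) → R := Fin.snoc f g with hF
  set J : Ideal R := Ideal.span (Set.range f) with hJ
  set I : Ideal R := Ideal.span (Set.range F) with hI
  have hFI : ∀ j, F j ∈ I := fun j => Ideal.subset_span ⟨j, rfl⟩
  rw [P.as_sum, map_sum]
  refine Ideal.sum_mem _ fun α hα => ?_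
  rw [MvPolynomial.eval_monomial]
  have hαne : α ≠ Finsupp.single (Fin.last n) (k + 1) := by
    rintro rfl
    exact (MvPolynomial.mem_support_iff.mp hα) hc
  have hdeg : (∑ j ∈ α.support, α j) = k + 1 := by
    have := hP (MvPolynomial.mem_support_iff.mp hα)
    simpa [Finsupp.weight_apply, Finsupp.sum] using this
  obtain ⟨i, hi0, hil⟩ : ∃ i, α i ≠ 0 ∧ i ≠ Fin.last n := by
    by_contra hcon
    push_neg at hcon
    have hss : α.support ⊆ {Fin.last n} := by
      intro j hj
      rw [Finset.mem_singleton]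
      exact hcon j (Finsupp.mem_support_iff.mp hj)
    have hαs := Finsupp.support_subset_singleton.mp hss
    apply hαne
    rw [hαs]
    congr 1
    rw [hαs] at hdeg
    rcases eq_or_ne (α (Fin.last n)) 0 with h0 | h0
    · rw [h0] at hdeg
      simp only [Finsupp.single_zero, Finsupp.support_zero, Finset.sum_empty] at hdeg
      omega
    · rwa [Finsupp.support_single_ne_zero _ h0, Finset.sum_singleton,
        Finsupp.single_eq_same] at hdeg
  have hmem : i ∈ α.support := Finsupp.mem_support_iff.mpr hi0
  have hsplit : (α.prod fun j e => F j ^ e)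
      = F i * (F i ^ (α i - 1) * ∏ j ∈ α.support.erase i, F j ^ α j) := by
    rw [Finsupp.prod, ← Finset.mul_prod_erase _ _ hmem, ← mul_assoc]
    congr 1
    rw [← pow_succ']
    congr 1
    omega
  rw [hsplit]
  have hFiJ : F i ∈ J := by
    obtain ⟨i', rfl⟩ := Fin.exists_castSucc_eq.mpr hil
    have : F (Fin.castSucc i') = f i' := by simp [hF, Fin.snoc_castSucc]
    rw [this]
    exact Ideal.subset_span ⟨i', rfl⟩
  have hrest : F i ^ (α i - 1) * ∏ j ∈ α.support.erase i, F j ^ α j ∈ I ^ k := by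
    have h1 : F i ^ (α i - 1) ∈ I ^ (α i - 1) := Ideal.pow_mem_pow (hFI i) _
    have h2 := prod_pow_mem_pow I hFI (α.support.erase i) α
    have h3 := Ideal.mul_mem_mul h1 h2
    rw [← pow_add] at h3
    have harr : α i - 1 + ∑ j ∈ α.support.erase i, α j = k := by
      have := Finset.add_sum_erase _ α hmem
      omega
    rwa [harr] at h3
  exact Ideal.mul_mem_left _ _ (Ideal.mul_mem_mul hFiJ hrest)

/-- Elements of `J · I^k` are images of homogeneous polynomials of degree `k+1` with no
`ξ_last^(k+1)` component. -/
lemma exists_homog_eval_eq_snoc {n : ℕ} (f : Fin n → R) (g : R) (k : ℕ) {x : R}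
    (hx : x ∈ Ideal.span (Set.range f) *
      (Ideal.span (Set.range (Fin.snoc f g : Fin (n+1) → R))) ^ k) :
    ∃ P : MvPolynomial (Fin (n+1)) R, P.IsHomogeneous (k + 1) ∧
      MvPolynomial.eval (Fin.snoc f g) P = x ∧
      MvPolynomial.eval (Fin.snoc (fun _ : Fin n => (0 : R)) 1) P = 0 := by
  classical
  set F : Fin (n + 1) → R := Fin.snoc f g with hF
  set w : Fin (n + 1) → R := Fin.snoc (fun _ : Fin n => (0 : R)) 1 with hw
  refine Submodule.mul_induction_on hx ?_ ?_
  · intro a ha b hb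
    obtain ⟨c, hc⟩ := (mem_span_range_iff_exists_fun _).mp ha
    obtain ⟨Pb, hPb, hPbe⟩ := exists_homog_eval_eq F k hb
    refine ⟨(∑ i, MvPolynomial.C (c i) * MvPolynomial.X (Fin.castSucc i)) * Pb, ?_, ?_, ?_⟩
    · have h1 : (∑ i, MvPolynomial.C (c i) *
          (MvPolynomial.X (Fin.castSucc i) : MvPolynomial (Fin (n+1)) R)).IsHomogeneous 1 :=
        MvPolynomial.IsHomogeneous.sum _ _ _ fun i _ => MvPolynomial.isHomogeneous_C_mul_X _ _
      have h2 := h1.mul hPb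
      rwa [show 1 + k = k + 1 from Nat.add_comm 1 k] at h2
    · have he : MvPolynomial.eval F
          (∑ i, MvPolynomial.C (c i) * MvPolynomial.X (Fin.castSucc i)) = a := by
        rw [map_sum]
        simp only [_root_.map_mul, MvPolynomial.eval_C, MvPolynomial.eval_X]
        have hFc : ∀ i : Fin n, F (Fin.castSucc i) = f i := fun i => by
          simp [hF, Fin.snoc_castSucc]
        simp only [hFc]
        simpa [smul_eq_mul] using hc
      rw [_root_.map_mul, he, hPbe]
    · have he : MvPolynomial.eval w
          (∑ i, MvPolynomial.C (c i) * MvPolynomial.X (Fin.castSucc i)) = 0 := by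
        rw [map_sum]
        simp only [_root_.map_mul, MvPolynomial.eval_C, MvPolynomial.eval_X]
        have hwc : ∀ i : Fin n, w (Fin.castSucc i) = 0 := fun i => by
          simp [hw, Fin.snoc_castSucc]
        simp [hwc]
      rw [_root_.map_mul, he, zero_mul]
  · rintro x y ⟨Px, hPx, hPxe, hPxw⟩ ⟨Py, hPy, hPye, hPyw⟩
    exact ⟨Px + Py, hPx.add hPy, by rw [map_add, hPxe, hPye], by rw [map_add, hPxw, hPyw, add_zero]⟩

lemma isHomogeneous_zero_eq_C {m : ℕ} {P : MvPolynomial (Fin m) R}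
    (hP : P.IsHomogeneous 0) : P = MvPolynomial.C (MvPolynomial.coeff 0 P) := by
  have h := MvPolynomial.homogeneousComponent_of_mem (n := 0) (m := 0) hP
  rw [if_pos rfl] at h
  conv_lhs => rw [← h, MvPolynomial.homogeneousComponent_zero]

theorem stmt0 {R : Type*} [CommRing R] [IsNoetherianRing R] [IsLocalRing R]
    {n : ℕ} (f : Fin n → R) (g : R) (J I : Ideal R)
    (hJ : J = Ideal.span (Set.range f)) (hI : I = J ⊔ Ideal.span {g})
    (hred : ∃ r : ℕ, I ^ (r + 1) = J * I ^ r) :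
    reductionNumber J I + 1 ≤ relationType (Fin.snoc f g) := by
  classical
  set F : Fin (n + 1) → R := Fin.snoc f g with hF
  set w : Fin (n + 1) → R := Fin.snoc (fun _ : Fin n => (0 : R)) 1 with hw
  set Q : Ideal (MvPolynomial (Fin (n+1)) R) := reesEquations F with hQ
  -- span (range F) = I
  have hrange : Set.range F = Set.range f ∪ {g} := by
    ext x
    constructor
    · rintro ⟨i, rfl⟩
      refine Fin.lastCases ?_ ?_ i
      · right; simp [hF, Fin.snoc_last]
      · intro j; left; exact ⟨j, by simp [hF, Fin.snoc_castSucc]⟩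
    · rintro (⟨j, rfl⟩ | hx)
      · exact ⟨Fin.castSucc j, by simp [hF, Fin.snoc_castSucc]⟩
      · rw [Set.mem_singleton_iff] at hx
        exact ⟨Fin.last n, by rw [hF, Fin.snoc_last, hx]⟩
  have hIF : Ideal.span (Set.range F) = I := by
    rw [hrange, Ideal.span_union, hI, hJ]
  -- the relation type belongs to the defining set
  have hSne : {L | 1 ≤ L ∧ idealUpToDegree (reesEquations F) L = reesEquations F}.Nonempty :=
    exists_relationType_mem F
  have hLmem : relationType F ∈ {L | 1 ≤ L ∧
      idealUpToDegree (reesEquations F) L = reesEquations F} := Nat.sInf_mem hSne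
  obtain ⟨hL1, hLup⟩ : 1 ≤ relationType F ∧
      idealUpToDegree Q (relationType F) = Q := hLmem
  obtain ⟨L₀, hL0⟩ : ∃ L₀, relationType F = L₀ + 1 := ⟨relationType F - 1, by omega⟩
  rw [hL0] at hLup
  -- key fact: g ^ (L₀+1) ∈ J * I ^ L₀
  have hgL : g ^ (L₀ + 1) ∈ J * I ^ L₀ := by
    obtain ⟨r, hr⟩ := hred
    have hgI : g ∈ I := by
      rw [hI]; exact Ideal.mem_sup_right (Ideal.subset_span rfl)
    have hgr : g ^ (r + 1) ∈ J * I ^ r := by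
      rw [← hr]; exact Ideal.pow_mem_pow hgI _
    -- construct the homogeneous relation of degree r+1
    rw [hJ, ← hIF] at hgr
    obtain ⟨P₀, hP₀hom, hP₀F, hP₀w⟩ := exists_homog_eval_eq_snoc f g r hgr
    set P : MvPolynomial (Fin (n+1)) R := MvPolynomial.X (Fin.last n) ^ (r + 1) - P₀ with hP
    have hPhom : P.IsHomogeneous (r + 1) :=
      (MvPolynomial.isHomogeneous_X_pow _ _).sub hP₀hom
    have hPQ : P ∈ Q := by
      rw [hQ, mem_reesEquations_iff, aeval_CX_of_isHomogeneous F hPhom]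
      have : MvPolynomial.eval F P = 0 := by
        rw [hP, map_sub, map_pow, MvPolynomial.eval_X, hP₀F]
        have : F (Fin.last n) = g := by rw [hF, Fin.snoc_last]
        rw [this, sub_self]
      rw [this]
      simp
    have hPw : MvPolynomial.eval w P = 1 := by
      rw [hP, map_sub, map_pow, MvPolynomial.eval_X, hP₀w]
      have : w (Fin.last n) = 1 := by rw [hw, Fin.snoc_last]
      rw [this, one_pow, sub_zero]
    -- main induction: every element of idealUpToDegree Q (L₀+1) has all "τ-coefficients"
    -- multiplying g^(L₀+1) into J * I^L₀
    have hmain : ∀ P' ∈ idealUpToDegree Q (L₀ + 1), ∀ e : ℕ,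
        (Polynomial.coeff (MvPolynomial.aeval
            (fun i => Polynomial.C (w i) * Polynomial.X) P') e) * g ^ (L₀ + 1)
          ∈ J * I ^ L₀ := by
      intro P' hP'
      refine Submodule.span_induction ?_ ?_ ?_ ?_ hP'
      · -- generators
        rintro q ⟨hqQ, e₀, he₀L, hqhom⟩ e
        rw [aeval_CX_of_isHomogeneous w hqhom]
        rw [Polynomial.coeff_C_mul, Polynomial.coeff_X_pow]
        rcases eq_or_ne e e₀ with rfl | hne
        · rw [if_pos rfl, mul_one]
          rcases Nat.eq_zero_or_pos e with rfl | hpos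
          · -- degree-0 elements of Q are zero constants
            have hqC := isHomogeneous_zero_eq_C hqhom
            have h0 : MvPolynomial.eval F q = 0 :=
              eval_eq_zero_of_mem_reesEquations hqQ hqhom
            have : MvPolynomial.eval w q = 0 := by
              rw [hqC] at h0 ⊢
              rw [MvPolynomial.eval_C] at h0 ⊢
              exact h0
            rw [this, zero_mul]
            exact Ideal.zero_mem _
          · obtain ⟨e₁, rfl⟩ : ∃ e₁, e = e₁ + 1 := ⟨e - 1, by omega⟩
            -- the core argument: eval w q * g^(e₁+1) ∈ J * I^e₁
            set c : R := MvPolynomial.eval w q with hc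
            set q' : MvPolynomial (Fin (n+1)) R :=
              q - MvPolynomial.C c * MvPolynomial.X (Fin.last n) ^ (e₁ + 1) with hq'
            have hq'hom : q'.IsHomogeneous (e₁ + 1) :=
              hqhom.sub (MvPolynomial.isHomogeneous_C_mul_X_pow _ _ _)
            have hq'c : MvPolynomial.coeff (Finsupp.single (Fin.last n) (e₁ + 1)) q' = 0 := by
              have h1 : MvPolynomial.eval w q' = 0 := by
                rw [hq', map_sub, _root_.map_mul, map_pow, MvPolynomial.eval_C,
                  MvPolynomial.eval_X]
                have : w (Fin.last n) = 1 := by rw [hw, Fin.snoc_last]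
                rw [this, one_pow, mul_one, sub_self]
              rw [← eval_snoc_eq_coeff hq'hom]
              exact h1
            have hq'mem := eval_mem_of_coeff_eq_zero f g hq'hom hq'c
            rw [hIF, ← hJ] at hq'mem
            have hq'F : MvPolynomial.eval F q' = - (c * g ^ (e₁ + 1)) := by
              rw [hq', map_sub, _root_.map_mul, map_pow, MvPolynomial.eval_C,
                MvPolynomial.eval_X]
              have hFg : F (Fin.last n) = g := by rw [hF, Fin.snoc_last]
              rw [hFg, eval_eq_zero_of_mem_reesEquations hqQ hqhom, zero_sub]
            have hcg : c * g ^ (e₁ + 1) ∈ J * I ^ e₁ := by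
              have := neg_mem hq'mem
              rw [hq'F, neg_neg] at this
              exact this
            -- scale up from degree e₁+1 to degree L₀+1
            have he₁L : e₁ ≤ L₀ := by omega
            have hsc : c * g ^ (L₀ + 1) = (c * g ^ (e₁ + 1)) * g ^ (L₀ - e₁) := by
              rw [mul_assoc, ← pow_add]
              congr 2
              omega
            rw [hsc]
            have hgI : g ∈ I := by
              rw [hI]; exact Ideal.mem_sup_right (Ideal.subset_span rfl)
            have hgpow : g ^ (L₀ - e₁) ∈ I ^ (L₀ - e₁) := Ideal.pow_mem_pow hgI _
            have := Ideal.mul_mem_mul hcg hgpow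
            rw [mul_assoc, ← pow_add] at this
            have harr : e₁ + (L₀ - e₁) = L₀ := by omega
            rwa [harr] at this
        · rw [if_neg hne, mul_zero, zero_mul]
          exact Ideal.zero_mem _
      · intro e
        simp only [map_zero, Polynomial.coeff_zero, zero_mul]
        exact Ideal.zero_mem _
      · intro x y _ _ hx hy e
        rw [map_add, Polynomial.coeff_add, add_mul]
        exact Ideal.add_mem _ (hx e) (hy e)
      · intro h x _ hx e
        rw [smul_eq_mul, _root_.map_mul, Polynomial.coeff_mul, Finset.sum_mul]
        refine Ideal.sum_mem _ fun p _ => ?_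
        rw [mul_assoc]
        exact Ideal.mul_mem_left _ _ (hx p.2)
    -- apply to P of degree r+1
    have hPup : P ∈ idealUpToDegree Q (L₀ + 1) := by rw [hLup]; exact hPQ
    have := hmain P hPup (r + 1)
    rw [aeval_CX_of_isHomogeneous w hPhom, hPw, Polynomial.coeff_C_mul,
      Polynomial.coeff_X_pow, if_pos rfl, mul_one, one_mul] at this
    exact this
  -- binomial containment: I^(L₀+1) ≤ J * I^L₀ ⊔ (span {g})^(L₀+1)
  have hbin : ∀ k : ℕ, I ^ (k + 1) ≤ J * I ^ k ⊔ (Ideal.span {g}) ^ (k + 1) := by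
    intro k
    induction k with
    | zero => rw [pow_one, pow_one, pow_zero, mul_one, hI]
    | succ k ih =>
        have h1 : I ^ (k + 2) = I * I ^ (k + 1) := by rw [pow_succ, mul_comm]
        rw [h1]
        refine le_trans (Ideal.mul_mono_right ih) ?_
        rw [Ideal.mul_sup]
        refine sup_le ?_ ?_
        · have h2 : I * (J * I ^ k) = J * I ^ (k + 1) := by
            rw [pow_succ]
            ring
          rw [h2]
          exact le_sup_left
        · rw [hI, Ideal.sup_mul]
          refine sup_le ?_ ?_
          · refine le_trans (Ideal.mul_mono_right (Ideal.pow_right_mono ?_ _)) le_sup_left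
            exact le_sup_right
          · have h3 : Ideal.span {g} * Ideal.span {g} ^ (k + 1)
                = Ideal.span {g} ^ (k + 2) := by
              rw [← pow_succ']
            rw [h3]
            exact le_sup_right
  -- conclude I^(L₀+1) = J * I^L₀
  have hpow : I ^ (L₀ + 1) = J * I ^ L₀ := by
    refine le_antisymm ?_ ?_
    · refine le_trans (hbin L₀) (sup_le le_rfl ?_)
      rw [Ideal.span_singleton_pow, Ideal.span_le, Set.singleton_subset_iff]
      exact hgL
    · have hJI : J ≤ I := by rw [hI]; exact le_sup_left
      calc J * I ^ L₀ ≤ I * I ^ L₀ := Ideal.mul_mono_left hJI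
        _ = I ^ (L₀ + 1) := by rw [pow_succ, mul_comm]
  have hrn : reductionNumber J I ≤ L₀ := Nat.sInf_le hpow
  rw [hL0]
  omega
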